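/- arXiv:2503.10268 — 2 statements merged into one kernel-verified Lean document; each statement's English description precedes it below -/
import Mathlib

section
/- Let k ≥ 6 and n ≥ (k−1)² + 1 be integers, let G be a W_k-semi-saturated graph on n vertices with maximum degree at most n − 2, and let r be a natural number. If |A*_G| ≤ r, then 2·e(G) ≥ (k − 1)n − (k − 3)r. -/
open SimpleGraph

/-- `G` contains a copy of `F`, i.e. a subgraph isomorphic to `F`. -/
def HasCopy {V W : Type*} (F : SimpleGraph V) (G : SimpleGraph W) : Prop :=
  ∃ f : F →g G, Function.Injective f

/-- `G` is `F`-free: `G` contains no subgraph isomorphic to `F`. -/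
def IsFree {V W : Type*} (F : SimpleGraph V) (G : SimpleGraph W) : Prop :=
  ¬ HasCopy F G

/-- `G` is `F`-semi-saturated: for every pair of non-adjacent vertices `u ≠ v`,
the graph `G + uv` contains a copy of `F` using the edge `uv`. -/
def IsSemiSat {V W : Type*} (F : SimpleGraph V) (G : SimpleGraph W) : Prop :=
  ∀ u v : W, u ≠ v → ¬ G.Adj u v →
    ∃ f : F →g (G ⊔ fromEdgeSet {s(u, v)}), Function.Injective f ∧
      ∃ a b : V, F.Adj a b ∧ f a = u ∧ f b = v

/-- `G` is `F`-saturated: `F`-free and `F`-semi-saturated. -/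
def IsSat {V W : Type*} (F : SimpleGraph V) (G : SimpleGraph W) : Prop :=
  IsFree F G ∧ IsSemiSat F G

/-- The join `G ∨ H` of two graphs. -/
def graphJoin {V W : Type*} (G : SimpleGraph V) (H : SimpleGraph W) :
    SimpleGraph (V ⊕ W) where
  Adj x y :=
    match x, y with
    | Sum.inl a, Sum.inl b => G.Adj a b
    | Sum.inr a, Sum.inr b => H.Adj a b
    | Sum.inl _, Sum.inr _ => True
    | Sum.inr _, Sum.inl _ => True
  symm := ⟨by rintro (a | a) (b | b) h <;> first | exact G.adj_symm h | exact H.adj_symm h | trivial⟩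
  loopless := ⟨by rintro (a | a) h <;> first | exact G.irrefl h | exact H.irrefl h⟩

/-- The wheel `W_k = K_1 ∨ C_k`. -/
def wheel (k : ℕ) : SimpleGraph (Unit ⊕ Fin k) :=
  graphJoin (⊥ : SimpleGraph Unit) (cycleGraph k)

/-- `sat(n, F)`: the minimum number of edges in an `F`-saturated graph on `n` vertices. -/
noncomputable def satNumber {V : Type*} (F : SimpleGraph V) (n : ℕ) : ℕ :=
  sInf { m | ∃ G : SimpleGraph (Fin n), IsSat F G ∧ G.edgeSet.ncard = m }

/-- `ssat(n, F)`: the minimum number of edges in an `F`-semi-saturated graph on `n` vertices. -/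
noncomputable def ssatNumber {V : Type*} (F : SimpleGraph V) (n : ℕ) : ℕ :=
  sInf { m | ∃ G : SimpleGraph (Fin n), IsSemiSat F G ∧ G.edgeSet.ncard = m }

/-- The degree of a vertex. -/
noncomputable def degS {n : ℕ} (G : SimpleGraph (Fin n)) (u : Fin n) : ℕ :=
  (G.neighborSet u).ncard

/-- `A_G`: the vertices of degree at least `k - 1`. -/
def setA {n : ℕ} (k : ℕ) (G : SimpleGraph (Fin n)) : Set (Fin n) :=
  {u | k - 1 ≤ degS G u}

/-- `B_G`: the vertices of degree between `3` and `k - 2`. -/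
def setB {n : ℕ} (k : ℕ) (G : SimpleGraph (Fin n)) : Set (Fin n) :=
  {u | 3 ≤ degS G u ∧ degS G u ≤ k - 2}

/-- `C_G`: the vertices of degree `2`. -/
def setC {n : ℕ} (G : SimpleGraph (Fin n)) : Set (Fin n) :=
  {u | degS G u = 2}

/-- `A*_G = B_G ∪ C_G`. -/
def setAstar {n : ℕ} (k : ℕ) (G : SimpleGraph (Fin n)) : Set (Fin n) :=
  setB k G ∪ setC G


open Fin.CommRing in
lemma wheel_three_nbrs (k : ℕ) (hk : 6 ≤ k) (a : Unit ⊕ Fin k) :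
    ∃ x y z : Unit ⊕ Fin k, x ≠ y ∧ x ≠ z ∧ y ≠ z ∧
      (wheel k).Adj a x ∧ (wheel k).Adj a y ∧ (wheel k).Adj a z := by
  obtain ⟨m, rfl⟩ : ∃ m, k = m + 3 := ⟨k - 3, by omega⟩
  have h2ne : (2 : Fin (m + 3)) ≠ 0 := by
    intro h2
    have hv : ((2 : Fin (m + 3)) : ℕ) = 2 := Fin.val_two
    rw [h2] at hv
    simp at hv
  match a with
  | Sum.inl _ =>
      refine ⟨Sum.inr ⟨0, by omega⟩, Sum.inr ⟨1, by omega⟩, Sum.inr ⟨2, by omega⟩,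
        ?_, ?_, ?_, trivial, trivial, trivial⟩ <;> simp [Fin.ext_iff]
  | Sum.inr i =>
      refine ⟨Sum.inl (), Sum.inr (i - 1), Sum.inr (i + 1), by simp, by simp, ?_, trivial, ?_, ?_⟩
      · simp only [ne_eq, Sum.inr.injEq]
        intro h
        apply h2ne
        have : i + 1 - (i - 1) = (0 : Fin (m + 3)) := by rw [← h]; ring
        calc (2 : Fin (m + 3)) = i + 1 - (i - 1) := by ring
          _ = 0 := this
      · show (cycleGraph (m + 3)).Adj i (i - 1)
        exact cycleGraph_adj.mpr (Or.inl (by ring))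
      · show (cycleGraph (m + 3)).Adj i (i + 1)
        exact cycleGraph_adj.mpr (Or.inr (by ring))

open scoped Classical in
lemma degS_eq_degree {n : ℕ} (G : SimpleGraph (Fin n)) (u : Fin n) :
    degS G u = G.degree u := by
  rw [degS, ← SimpleGraph.card_neighborFinset_eq_degree,
    SimpleGraph.neighborFinset_def, Set.ncard_eq_toFinset_card']

open scoped Classical in
lemma deg_ge_two (k n : ℕ) (hk : 6 ≤ k) (hn2 : 2 ≤ n) (G : SimpleGraph (Fin n))
    (hG : IsSemiSat (wheel k) G) (hdeg : ∀ v : Fin n, degS G v ≤ n - 2)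
    (u : Fin n) : 2 ≤ G.degree u := by
  -- find a non-neighbor v ≠ u
  have hcard : (insert u (G.neighborFinset u)).card < n := by
    have h1 := Finset.card_insert_le u (G.neighborFinset u)
    rw [SimpleGraph.card_neighborFinset_eq_degree] at h1
    have h2 := hdeg u
    rw [degS_eq_degree] at h2
    omega
  obtain ⟨v, hv⟩ : ∃ v : Fin n, v ∉ insert u (G.neighborFinset u) := by
    by_contra h
    push_neg at h
    have : (Finset.univ : Finset (Fin n)) ⊆ insert u (G.neighborFinset u) :=
      fun x _ => h x
    have hle := Finset.card_le_card this
    rw [Finset.card_univ, Fintype.card_fin] at hle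
    omega
  simp only [Finset.mem_insert, SimpleGraph.mem_neighborFinset, not_or] at hv
  obtain ⟨hvu, hvadj⟩ := hv
  obtain ⟨f, hfinj, a, b, hab, hfa, hfb⟩ :=
    hG u v (fun h => hvu h.symm) hvadj
  obtain ⟨x, y, z, hxy, hxz, hyz, hax, hay, haz⟩ := wheel_three_nbrs k hk a
  -- f x, f y, f z are distinct neighbors of u in G ⊔ e
  have key : ∀ w : Unit ⊕ Fin k, (wheel k).Adj a w →
      f w ∈ insert v (G.neighborFinset u) := by
    intro w hw
    have := f.map_adj hw
    rw [hfa] at this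
    rcases this with h | h
    · exact Finset.mem_insert_of_mem (SimpleGraph.mem_neighborFinset _ _ _ |>.mpr h)
    · rw [SimpleGraph.fromEdgeSet_adj] at h
      obtain ⟨hs, -⟩ := h
      simp only [Set.mem_singleton_iff, Sym2.eq, Sym2.rel_iff', Prod.mk.injEq,
        Prod.swap_prod_mk] at hs
      rcases hs with ⟨-, h⟩ | ⟨h1, -⟩
      · rw [h]; exact Finset.mem_insert_self _ _
      · exact absurd h1.symm hvu
  have hsub : ({f x, f y, f z} : Finset (Fin n)) ⊆ insert v (G.neighborFinset u) := by
    intro w hw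
    simp only [Finset.mem_insert, Finset.mem_singleton] at hw
    rcases hw with rfl | rfl | rfl
    · exact key x hax
    · exact key y hay
    · exact key z haz
  have hc3 : ({f x, f y, f z} : Finset (Fin n)).card = 3 := by
    rw [Finset.card_insert_of_notMem, Finset.card_insert_of_notMem, Finset.card_singleton]
    · simp only [Finset.mem_singleton]
      exact fun h => hyz (hfinj h)
    · simp only [Finset.mem_insert, Finset.mem_singleton, not_or]
      exact ⟨fun h => hxy (hfinj h), fun h => hxz (hfinj h)⟩
  have := Finset.card_le_card hsub
  have hins := Finset.card_insert_le v (G.neighborFinset u)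
  rw [SimpleGraph.card_neighborFinset_eq_degree] at hins
  omega

/-- Lemma 3.1: if `|A*_G| ≤ r`, then `2e(G) ≥ (k - 1)n - (k - 3)r`. -/
theorem small_Astar_bound (k n r : ℕ) (hk : 6 ≤ k) (hn : (k - 1) ^ 2 + 1 ≤ n)
    (G : SimpleGraph (Fin n)) (hG : IsSemiSat (wheel k) G)
    (hdeg : ∀ v : Fin n, degS G v ≤ n - 2)
    (hr : (setAstar k G).ncard ≤ r) :
    ((k : ℤ) - 1) * n - ((k : ℤ) - 3) * r ≤ 2 * (G.edgeSet.ncard : ℤ) := by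
  classical
  have hn2 : 2 ≤ n := by
    have := Nat.pow_le_pow_left (by omega : 5 ≤ k - 1) 2
    omega
  -- degrees
  have hdeg2 : ∀ u : Fin n, 2 ≤ G.degree u := deg_ge_two k n hk hn2 G hG hdeg
  have hAfin : (setAstar k G).Finite := Set.toFinite _
  set s : Finset (Fin n) := hAfin.toFinset with hs
  have hscard : s.card = (setAstar k G).ncard :=
    (Set.ncard_eq_toFinset_card _ hAfin).symm
  have hdegA : ∀ u : Fin n, u ∉ s → k - 1 ≤ G.degree u := by
    intro u hu
    rw [hs, Set.Finite.mem_toFinset] at hu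
    simp only [setAstar, setB, setC, Set.mem_union, Set.mem_setOf_eq, not_or, not_and,
      not_le] at hu
    obtain ⟨h1, h2⟩ := hu
    have hd2 := hdeg2 u
    rw [← degS_eq_degree] at hd2 ⊢
    by_cases h3 : 3 ≤ degS G u
    · have := h1 h3
      omega
    · omega
  -- handshake
  have hsum : ∑ v : Fin n, G.degree v = 2 * G.edgeFinset.card :=
    SimpleGraph.sum_degrees_eq_twice_card_edges G
  have hedge : G.edgeSet.ncard = G.edgeFinset.card := by
    rw [Set.ncard_eq_toFinset_card']
    congr 1
  -- split the sum
  have hsplit : ∑ v : Fin n, (G.degree v : ℤ) =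
      ∑ v ∈ s, (G.degree v : ℤ) + ∑ v ∈ sᶜ, (G.degree v : ℤ) :=
    (Finset.sum_add_sum_compl s _).symm
  have hb1 : (2 : ℤ) * s.card ≤ ∑ v ∈ s, (G.degree v : ℤ) := by
    calc (2 : ℤ) * s.card = ∑ _v ∈ s, (2 : ℤ) := by
          rw [Finset.sum_const, nsmul_eq_mul]; ring
      _ ≤ ∑ v ∈ s, (G.degree v : ℤ) :=
          Finset.sum_le_sum (fun v _ => by exact_mod_cast hdeg2 v)
  have hb2 : ((k : ℤ) - 1) * sᶜ.card ≤ ∑ v ∈ sᶜ, (G.degree v : ℤ) := by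
    calc ((k : ℤ) - 1) * sᶜ.card = ∑ _v ∈ sᶜ, ((k : ℤ) - 1) := by
          rw [Finset.sum_const, nsmul_eq_mul]; ring
      _ ≤ ∑ v ∈ sᶜ, (G.degree v : ℤ) := by
          refine Finset.sum_le_sum (fun v hv => ?_)
          have := hdegA v (by simpa using (Finset.mem_compl.mp hv))
          have hk1 : (1 : ℤ) ≤ k := by exact_mod_cast Nat.one_le_of_lt (by omega : 1 < k)
          push_cast
          omega
  have hcompl : (sᶜ.card : ℤ) = (n : ℤ) - s.card := by
    have : sᶜ.card = n - s.card := by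
      rw [Finset.card_compl]; simp
    have hle : s.card ≤ n := by
      have := Finset.card_le_card (Finset.subset_univ s); simpa using this
    omega
  have hsc : (s.card : ℤ) ≤ r := by
    rw [hscard] at *
    exact_mod_cast le_trans (le_of_eq rfl) (by exact_mod_cast hr)
  have hk3 : (0 : ℤ) ≤ (k : ℤ) - 3 := by
    have : (6 : ℤ) ≤ k := by exact_mod_cast hk
    omega
  have htotal : ((k : ℤ) - 1) * n - ((k : ℤ) - 3) * s.card ≤ ∑ v : Fin n, (G.degree v : ℤ) := by
    rw [hsplit]
    nlinarith [hb1, hb2, hcompl]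
  have hfin : ∑ v : Fin n, (G.degree v : ℤ) = 2 * (G.edgeSet.ncard : ℤ) := by
    rw [hedge]
    exact_mod_cast hsum
  rw [← hfin]
  have : ((k : ℤ) - 3) * s.card ≤ ((k : ℤ) - 3) * r := by
    exact mul_le_mul_of_nonneg_left hsc hk3
  linarith
end

section
/- Let k ≥ 6 and n ≥ (k−1)² + 1 be integers, and let G be a W_k-semi-saturated graph on n vertices with maximum degree at most n − 2 and with |A*_G| ≥ k. If no vertex of G is adjacent to every vertex of A*_G (i.e. the intersection of the neighbourhoods N(v) over all v ∈ A*_G is empty), then there exists a set X ⊆ V(G) with |X| ≤ (k−1)² such that every vertex u ∈ V(G) ∖ X has at least 2 neighbours in X. -/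
open SimpleGraph

section AuxLemmas

variable {n k : ℕ}

lemma sup_adj_transfer {G : SimpleGraph (Fin n)} {u v x y : Fin n}
    (h : (G ⊔ fromEdgeSet {s(u, v)}).Adj x y) (hy1 : y ≠ u) (hy2 : y ≠ v) : G.Adj x y := by
  rcases h with h | h
  · exact h
  · rw [fromEdgeSet_adj, Set.mem_singleton_iff, Sym2.eq_iff] at h
    rcases h.1 with ⟨rfl, rfl⟩ | ⟨rfl, rfl⟩ <;> simp at hy1 hy2

lemma cycle_exists_nbr (hk : 3 ≤ k) (j : Fin k) : ∃ j', (cycleGraph k).Adj j j' := by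
  obtain ⟨m, rfl⟩ : ∃ m, k = m + 2 := ⟨k - 2, by omega⟩
  exact ⟨j + 1, cycleGraph_adj.mpr (Or.inr (add_sub_cancel_left j 1))⟩

/-- Any edge of the wheel has a common neighbour distinct from both endpoints. -/
lemma wheel_common_nbr (hk : 3 ≤ k) {a b : Unit ⊕ Fin k} (hab : (wheel k).Adj a b) :
    ∃ c, c ≠ a ∧ c ≠ b ∧ (wheel k).Adj a c ∧ (wheel k).Adj b c := by
  match a, b with
  | Sum.inl x, Sum.inl y => exact absurd hab (by simp [wheel, graphJoin])
  | Sum.inl x, Sum.inr j =>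
      obtain ⟨j', hj'⟩ := cycle_exists_nbr hk j
      exact ⟨Sum.inr j', by simp, by simp [hj'.ne'], trivial, hj'⟩
  | Sum.inr i, Sum.inl y =>
      obtain ⟨i', hi'⟩ := cycle_exists_nbr hk i
      exact ⟨Sum.inr i', by simp [hi'.ne'], by simp, hi', trivial⟩
  | Sum.inr i, Sum.inr j =>
      exact ⟨Sum.inl (), by simp, by simp, trivial, trivial⟩

/-- In a `W_k`-semi-saturated graph, any two distinct non-adjacent vertices have a
common neighbour. -/
lemma common_nbr_of_semiSat {G : SimpleGraph (Fin n)} (hk : 3 ≤ k)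
    (hG : IsSemiSat (wheel k) G) {u v : Fin n} (huv : u ≠ v) (hna : ¬ G.Adj u v) :
    ∃ w, G.Adj u w ∧ G.Adj v w := by
  obtain ⟨f, hf, a, b, hab, ha, hb⟩ := hG u v huv hna
  obtain ⟨c, hca, hcb, hac, hbc⟩ := wheel_common_nbr hk hab
  have h1 : f c ≠ u := fun h => hca (hf (h.trans ha.symm))
  have h2 : f c ≠ v := fun h => hcb (hf (h.trans hb.symm))
  have hu := f.map_adj hac
  have hv := f.map_adj hbc
  rw [ha] at hu
  rw [hb] at hv
  exact ⟨f c, sup_adj_transfer hu h1 h2, sup_adj_transfer hv h1 h2⟩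

lemma ncard_biUnion_ball_le (hk : 2 ≤ k) (G : SimpleGraph (Fin n)) (S : Finset (Fin n))
    (h : ∀ v ∈ S, degS G v ≤ k - 2) :
    (⋃ v ∈ S, insert v (G.neighborSet v)).ncard ≤ S.card * (k - 1) := by
  induction S using Finset.induction with
  | empty => simp
  | @insert a S ha ih =>
      rw [Finset.set_biUnion_insert]
      calc (insert a (G.neighborSet a) ∪ ⋃ v ∈ S, insert v (G.neighborSet v)).ncard
          ≤ (insert a (G.neighborSet a)).ncard + (⋃ v ∈ S, insert v (G.neighborSet v)).ncard :=
            Set.ncard_union_le _ _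
        _ ≤ (k - 1) + S.card * (k - 1) := by
            have h1 : (insert a (G.neighborSet a)).ncard ≤ (G.neighborSet a).ncard + 1 :=
              Set.ncard_insert_le _ _
            have h2 : (G.neighborSet a).ncard ≤ k - 2 := h a (Finset.mem_insert_self a S)
            have h3 := ih (fun v hv => h v (Finset.mem_insert_of_mem hv))
            have hb : (insert a (G.neighborSet a)).ncard ≤ k - 1 := by omega
            exact Nat.add_le_add hb h3
        _ ≤ (insert a S).card * (k - 1) := by
            rw [Finset.card_insert_of_notMem ha, Nat.succ_mul]
            omega

lemma degS_le_of_mem_setAstar {G : SimpleGraph (Fin n)} (hk : 6 ≤ k) {v : Fin n}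
    (hv : v ∈ setAstar k G) : degS G v ≤ k - 2 := by
  rcases hv with hv | hv
  · exact hv.2
  · rw [hv]; omega

/-- Greedy construction of a small subset of `A*` whose neighbourhoods have empty
intersection. -/
lemma build_S {G : SimpleGraph (Fin n)} (hk : 6 ≤ k)
    (hcap : (⋂ v ∈ setAstar k G, G.neighborSet v) = ∅) :
    ∀ m : ℕ, ∀ S : Finset (Fin n), S.Nonempty → ↑S ⊆ setAstar k G →
      S.card + (⋂ v ∈ S, G.neighborSet v).ncard ≤ k - 1 →
      (⋂ v ∈ S, G.neighborSet v).ncard ≤ m →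
      ∃ S' : Finset (Fin n), S'.Nonempty ∧ ↑S' ⊆ setAstar k G ∧ S'.card ≤ k - 1 ∧
        (⋂ v ∈ S', G.neighborSet v) = ∅ := by
  intro m
  induction m with
  | zero =>
      intro S hSne hSA hsum hle
      refine ⟨S, hSne, hSA, by omega, ?_⟩
      have hfin : (⋂ v ∈ S, G.neighborSet v).Finite := Set.toFinite _
      rcases Set.eq_empty_or_nonempty (⋂ v ∈ S, G.neighborSet v) with h | h
      · exact h
      · have := (Set.ncard_pos (Set.toFinite _)).mpr h
        omega
  | succ m ih =>
      intro S hSne hSA hsum hle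
      rcases Set.eq_empty_or_nonempty (⋂ v ∈ S, G.neighborSet v) with h | ⟨w, hw⟩
      · exact ⟨S, hSne, hSA, by omega, h⟩
      · have hwA : w ∉ ⋂ v ∈ setAstar k G, G.neighborSet v := by rw [hcap]; exact id
        rw [Set.mem_iInter₂] at hwA
        push_neg at hwA
        obtain ⟨v, hvA, hvw⟩ := hwA
        have hvS : v ∉ S := by
          intro hvS
          exact hvw (Set.mem_iInter₂.mp hw v hvS)
        have hsub : (⋂ x ∈ insert v S, G.neighborSet x) ⊆ (⋂ x ∈ S, G.neighborSet x) := by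
          intro y hy
          rw [Set.mem_iInter₂] at hy ⊢
          intro x hx
          exact hy x (Finset.mem_insert_of_mem hx)
        have hwnotin : w ∉ ⋂ x ∈ insert v S, G.neighborSet x := by
          intro hy
          exact hvw (Set.mem_iInter₂.mp hy v (Finset.mem_insert_self v S))
        have hlt : (⋂ x ∈ insert v S, G.neighborSet x).ncard <
            (⋂ x ∈ S, G.neighborSet x).ncard := by
          apply Set.ncard_lt_ncard _ (Set.toFinite _)
          exact Set.ssubset_iff_of_subset hsub |>.mpr ⟨w, hw, hwnotin⟩
        have hcard : (insert v S).card = S.card + 1 := Finset.card_insert_of_notMem hvS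
        refine ih (insert v S) ⟨v, Finset.mem_insert_self v S⟩ ?_ (by omega) (by omega)
        intro x hx
        rcases Finset.mem_insert.mp hx with rfl | hx
        · exact hvA
        · exact hSA hx

end AuxLemmas

/-- Lemma 3.2: if no vertex is adjacent to every vertex of `A*_G`, then there is a set
`X` with `|X| ≤ (k-1)²` such that every vertex outside `X` has at least two
neighbours in `X`. -/
theorem exists_dominating_set (k n : ℕ) (hk : 6 ≤ k) (hn : (k - 1) ^ 2 + 1 ≤ n)
    (G : SimpleGraph (Fin n)) (hG : IsSemiSat (wheel k) G)
    (hdeg : ∀ v : Fin n, degS G v ≤ n - 2)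
    (hA : k ≤ (setAstar k G).ncard)
    (hcap : (⋂ v ∈ setAstar k G, G.neighborSet v) = ∅) :
    ∃ X : Set (Fin n), X.ncard ≤ (k - 1) ^ 2 ∧
      ∀ u ∉ X, 2 ≤ (G.neighborSet u ∩ X).ncard := by
  classical
  -- A* is nonempty
  obtain ⟨v0, hv0⟩ : (setAstar k G).Nonempty :=
    Set.nonempty_of_ncard_ne_zero (by omega)
  -- build the small set S ⊆ A* with empty neighbourhood intersection
  obtain ⟨S, hSne, hSA, hScard, hSInter⟩ :=
    build_S hk hcap (⋂ v ∈ ({v0} : Finset (Fin n)), G.neighborSet v).ncard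
      ({v0} : Finset (Fin n)) ⟨v0, Finset.mem_singleton_self v0⟩
      (by simpa using hv0)
      (by
        have h1 : (⋂ v ∈ ({v0} : Finset (Fin n)), G.neighborSet v) = G.neighborSet v0 := by
          simp
        have h2 : degS G v0 ≤ k - 2 := degS_le_of_mem_setAstar hk hv0
        rw [h1, Finset.card_singleton]
        have : (G.neighborSet v0).ncard = degS G v0 := rfl
        omega)
      le_rfl
  -- the dominating set X
  refine ⟨⋃ v ∈ S, insert v (G.neighborSet v), ?_, ?_⟩
  · calc (⋃ v ∈ S, insert v (G.neighborSet v)).ncard ≤ S.card * (k - 1) :=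
          ncard_biUnion_ball_le (by omega) G S (fun v hv => degS_le_of_mem_setAstar hk (hSA hv))
      _ ≤ (k - 1) * (k - 1) := Nat.mul_le_mul_right _ hScard
      _ = (k - 1) ^ 2 := (sq (k - 1)).symm
  · intro u hu
    -- for each v ∈ S, a common neighbour of u and v
    have hcommon : ∀ v ∈ S, ∃ w, w ∈ G.neighborSet u ∩ (⋃ x ∈ S, insert x (G.neighborSet x)) ∧
        w ∈ G.neighborSet v := by
      intro v hv
      have huv : u ≠ v := by
        rintro rfl
        exact hu (Set.mem_biUnion hv (Set.mem_insert u _))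
      have hna : ¬ G.Adj u v := by
        intro h
        exact hu (Set.mem_biUnion hv (Set.mem_insert_of_mem _ h.symm))
      obtain ⟨w, hw1, hw2⟩ := common_nbr_of_semiSat (by omega) hG huv hna
      exact ⟨w, ⟨hw1, Set.mem_biUnion hv (Set.mem_insert_of_mem _ hw2)⟩, hw2⟩
    by_contra hlt
    push_neg at hlt
    have hle1 : (G.neighborSet u ∩ ⋃ v ∈ S, insert v (G.neighborSet v)).ncard ≤ 1 := by omega
    have hall := (Set.ncard_le_one (Set.toFinite _)).mp hle1
    obtain ⟨v1, hv1⟩ := hSne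
    obtain ⟨w0, hw0T, _⟩ := hcommon v1 hv1
    have hw0 : w0 ∈ ⋂ v ∈ S, G.neighborSet v := by
      rw [Set.mem_iInter₂]
      intro v hv
      obtain ⟨w, hwT, hwv⟩ := hcommon v hv
      exact hall w0 hw0T w hwT ▸ hwv
    rw [hSInter] at hw0
    exact hw0
end
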